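/- (Log-linear orthogonalized marginalization) Suppose Xₜ = gₜ(āₜ₋₁, X̄ₜ₋₁) + εₜ with (εₜ) independent random variables independent of the past, and E[Y | X̃, Ā] = exp(α + βᵀĀ + λᵀX̃) where X̃ₜ = Xₜ − gₜ(Āₜ₋₁, X̄ₜ₋₁). If E[exp(λₜεₜ)] < ∞ for all t, then the g-formula gives ψ(ā) = exp(α′ + βᵀā) where α′ = α + Σₜ log E[exp(λₜεₜ)]. In particular the causal effect is log-linear with slope β. -/

import Mathlib

open MeasureTheory

lemma pi_integral_prod_exp {T : ℕ} (lam : Fin T → ℝ) (ν : Fin T → Measure ℝ)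
    [∀ t, IsProbabilityMeasure (ν t)] :
    ∫ x : Fin T → ℝ, ∏ t, Real.exp (lam t * x t) ∂Measure.pi ν
      = ∏ t, ∫ z, Real.exp (lam t * z) ∂ν t :=
  integral_fintype_prod_eq_prod (ι := Fin T) (E := fun _ => ℝ)
    (fun t (x : ℝ) => Real.exp (lam t * x)) (μ := ν)

/-- log-linear orthogonalized marginalization: under the location model
the g-formula reduces to an integral over the product law of the independent
residuals εₜ ~ νₜ; if E[exp(λₜεₜ)] < ∞ for all t then
ψ(ā) = exp(α′ + βᵀā) with α′ = α + Σₜ log E[exp(λₜεₜ)]. -/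
theorem stmt7 {T : ℕ} (α : ℝ) (β lam : Fin T → ℝ)
    (ν : Fin T → Measure ℝ) [∀ t, IsProbabilityMeasure (ν t)]
    (hmgf : ∀ t, Integrable (fun z => Real.exp (lam t * z)) (ν t))
    (ψ : (Fin T → ℝ) → ℝ)
    (hψ : ψ = fun a =>
      ∫ x, Real.exp (α + ∑ t, β t * a t + ∑ t, lam t * x t) ∂Measure.pi ν)
    (α' : ℝ)
    (hα' : α' = α + ∑ t, Real.log (∫ z, Real.exp (lam t * z) ∂ν t)) :
    ∀ a, ψ a = Real.exp (α' + ∑ t, β t * a t) := by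
  intro a
  subst hψ hα'
  have hpos : ∀ t : Fin T, 0 < ∫ z, Real.exp (lam t * z) ∂ν t := fun t =>
    integral_exp_pos (hmgf t)
  have key : (∫ x : Fin T → ℝ,
        Real.exp (α + ∑ t, β t * a t + ∑ t, lam t * x t) ∂Measure.pi ν)
      = Real.exp (α + ∑ t, β t * a t) * ∏ t, ∫ z, Real.exp (lam t * z) ∂ν t := by
    calc (∫ x : Fin T → ℝ,
          Real.exp (α + ∑ t, β t * a t + ∑ t, lam t * x t) ∂Measure.pi ν)
        = ∫ x : Fin T → ℝ,
            Real.exp (α + ∑ t, β t * a t) * ∏ t, Real.exp (lam t * x t)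
              ∂Measure.pi ν := by
          congr 1; funext x
          rw [Real.exp_add, ← Real.exp_sum]
      _ = Real.exp (α + ∑ t, β t * a t) *
            ∫ x : Fin T → ℝ, ∏ t, Real.exp (lam t * x t) ∂Measure.pi ν :=
          integral_const_mul _ _
      _ = _ := by rw [pi_integral_prod_exp]
  show (∫ x : Fin T → ℝ,
      Real.exp (α + ∑ t, β t * a t + ∑ t, lam t * x t) ∂Measure.pi ν) = _
  rw [key]
  simp only [Real.exp_add, Real.exp_sum]
  have : ∀ t : Fin T, Real.exp (Real.log (∫ z, Real.exp (lam t * z) ∂ν t))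
      = ∫ z, Real.exp (lam t * z) ∂ν t := fun t => Real.exp_log (hpos t)
  rw [Finset.prod_congr rfl fun t _ => this t]
  ring
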